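/- arXiv:2412.01735 — 2 statements merged into one kernel-verified Lean document; each statement's English description precedes it below -/
import Mathlib

section
/- Let X be a normed space of dimension at least 2. Then numerical radius parallelism in B(X) fails to be transitive: there exist nonzero T, S, R ∈ B(X) with T ∥_v S and S ∥_v R but not T ∥_v R. -/
open Filter Topology

variable {𝕜 : Type*} [RCLike 𝕜] {X : Type*} [NormedAddCommGroup X] [NormedSpace 𝕜 X]

/-- The numerical radius of a bounded linear operator on a normed space:
`v(T) = sup {|x*(Tx)| : x ∈ S_X, x* ∈ J(x)}`. -/
noncomputable def nrad (T : X →L[𝕜] X) : ℝ :=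
  sSup {r : ℝ | ∃ (x : X) (f : X →L[𝕜] 𝕜), ‖x‖ = 1 ∧ ‖f‖ = 1 ∧ f x = 1 ∧ r = ‖f (T x)‖}

/-- Numerical radius parallelism: `T ∥_v S`. -/
def NRadParallel (T S : X →L[𝕜] X) : Prop :=
  ∃ lam : 𝕜, ‖lam‖ = 1 ∧ nrad (T + lam • S) = nrad T + nrad S

/-- Numerical radius Birkhoff orthogonality: `T ⊥_{vB} S`. -/
def NRadBirkhoff (T S : X →L[𝕜] X) : Prop :=
  ∀ α : 𝕜, nrad T ≤ nrad (T + α • S)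

namespace NradAux

/-- The defining set of the numerical radius. -/
def NSet (T : X →L[𝕜] X) : Set ℝ :=
  {r : ℝ | ∃ (x : X) (f : X →L[𝕜] 𝕜), ‖x‖ = 1 ∧ ‖f‖ = 1 ∧ f x = 1 ∧ r = ‖f (T x)‖}

lemma nrad_eq_sSup (T : X →L[𝕜] X) : nrad T = sSup (NSet T) := rfl

lemma NSet_bddAbove (T : X →L[𝕜] X) : BddAbove (NSet T) := by
  refine ⟨‖T‖, ?_⟩
  rintro r ⟨x, f, hx, hf, hfx, rfl⟩
  calc ‖f (T x)‖ ≤ ‖f‖ * ‖T x‖ := f.le_opNorm _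
    _ = ‖T x‖ := by rw [hf, one_mul]
    _ ≤ ‖T‖ * ‖x‖ := T.le_opNorm x
    _ = ‖T‖ := by rw [hx, mul_one]

lemma le_nrad (T : X →L[𝕜] X) {x : X} {f : X →L[𝕜] 𝕜}
    (hx : ‖x‖ = 1) (hf : ‖f‖ = 1) (hfx : f x = 1) : ‖f (T x)‖ ≤ nrad T :=
  le_csSup (NSet_bddAbove T) ⟨x, f, hx, hf, hfx, rfl⟩

lemma nrad_le (T : X →L[𝕜] X) {c : ℝ} (hc : 0 ≤ c)
    (h : ∀ (x : X) (f : X →L[𝕜] 𝕜), ‖x‖ = 1 → ‖f‖ = 1 → f x = 1 → ‖f (T x)‖ ≤ c) :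
    nrad T ≤ c := by
  refine Real.sSup_le ?_ hc
  rintro r ⟨x, f, hx, hf, hfx, rfl⟩
  exact h x f hx hf hfx

section Pair

variable {x₀ : X} {f₀ : X →L[𝕜] 𝕜}

lemma nrad_nonneg (T : X →L[𝕜] X)
    (hx : ‖x₀‖ = 1) (hf : ‖f₀‖ = 1) (hfx : f₀ x₀ = 1) : 0 ≤ nrad T :=
  le_trans (norm_nonneg _) (le_nrad T hx hf hfx)

lemma nrad_one (hx : ‖x₀‖ = 1) (hf : ‖f₀‖ = 1) (hfx : f₀ x₀ = 1) :
    nrad (1 : X →L[𝕜] X) = 1 := by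
  refine le_antisymm (nrad_le _ zero_le_one ?_) ?_
  · intro x f _ _ hfx1
    simp [ContinuousLinearMap.one_apply, hfx1]
  · have := le_nrad (1 : X →L[𝕜] X) hx hf hfx
    simpa [ContinuousLinearMap.one_apply, hfx] using this

/-- Any operator is `v`-parallel to the identity. -/
lemma parallel_one (T : X →L[𝕜] X)
    (hx : ‖x₀‖ = 1) (hf : ‖f₀‖ = 1) (hfx : f₀ x₀ = 1) :
    NRadParallel T (1 : X →L[𝕜] X) := by
  classical
  set ν : ℝ := nrad T with hν
  have hν0 : 0 ≤ ν := nrad_nonneg T hx hf hfx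
  set h : 𝕜 → ℝ := fun lam => nrad (T + lam • (1 : X →L[𝕜] X)) with hh
  -- elements of the defining set of `T + lam • 1`
  have helt : ∀ (lam : 𝕜) (x : X) (f : X →L[𝕜] 𝕜), ‖x‖ = 1 → ‖f‖ = 1 → f x = 1 →
      f ((T + lam • (1 : X →L[𝕜] X)) x) = f (T x) + lam := by
    intro lam x f hx1 hf1 hfx1
    simp [ContinuousLinearMap.add_apply, ContinuousLinearMap.smul_apply,
      ContinuousLinearMap.one_apply, map_smul, hfx1, smul_eq_mul]
  -- upper bound
  have hub : ∀ lam : 𝕜, ‖lam‖ = 1 → h lam ≤ ν + 1 := by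
    intro lam hlam
    refine nrad_le _ (by linarith) ?_
    intro x f hx1 hf1 hfx1
    rw [helt lam x f hx1 hf1 hfx1]
    calc ‖f (T x) + lam‖ ≤ ‖f (T x)‖ + ‖lam‖ := norm_add_le _ _
      _ ≤ ν + 1 := by
          have := le_nrad T hx1 hf1 hfx1
          rw [hlam]; linarith
  -- Lipschitz bound
  have hlip : ∀ lam mu : 𝕜, h lam ≤ h mu + ‖lam - mu‖ := by
    intro lam mu
    refine Real.sSup_le ?_ ?_
    · rintro r ⟨x, f, hx1, hf1, hfx1, rfl⟩
      rw [helt lam x f hx1 hf1 hfx1]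
      have h1 : ‖f (T x) + lam‖ ≤ ‖f (T x) + mu‖ + ‖lam - mu‖ := by
        have : f (T x) + lam = (f (T x) + mu) + (lam - mu) := by ring
        rw [this]; exact norm_add_le _ _
      have h2 : ‖f (T x) + mu‖ ≤ h mu := by
        have := le_nrad (T + mu • (1 : X →L[𝕜] X)) hx1 hf1 hfx1
        rwa [helt mu x f hx1 hf1 hfx1] at this
      linarith
    · have : 0 ≤ h mu := nrad_nonneg _ hx hf hfx
      positivity
  have hcont : Continuous h := by
    have : LipschitzWith 1 h := by
      refine LipschitzWith.of_dist_le_mul ?_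
      intro lam mu
      rw [Real.dist_eq, NNReal.coe_one, one_mul, abs_sub_le_iff]
      constructor
      · have := hlip lam mu; rw [dist_eq_norm]; linarith
      · have h2 := hlip mu lam
        have h3 : ‖mu - lam‖ = ‖lam - mu‖ := by rw [← norm_neg]; ring_nf
        rw [dist_eq_norm]
        linarith
    exact this.continuous
  -- maximum over the sphere
  obtain ⟨lam₀, hlam₀mem, hlam₀max⟩ :=
    (isCompact_sphere (0 : 𝕜) 1).exists_isMaxOn
      ⟨1, by simp [mem_sphere_zero_iff_norm]⟩ hcont.continuousOn
  have hlam₀ : ‖lam₀‖ = 1 := mem_sphere_zero_iff_norm.mp hlam₀mem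
  -- lower bound for the maximum
  have hlb : ν + 1 ≤ h lam₀ := by
    refine le_of_forall_pos_le_add ?_
    intro δ hδ
    obtain ⟨r, hrmem, hrgt⟩ : ∃ r ∈ NSet T, ν - δ < r := by
      have hne : (NSet T).Nonempty := ⟨‖f₀ (T x₀)‖, x₀, f₀, hx, hf, hfx, rfl⟩
      rcases exists_lt_of_lt_csSup hne
        (show ν - δ < sSup (NSet T) by rw [← nrad_eq_sSup]; linarith) with ⟨r, h1, h2⟩
      exact ⟨r, h1, h2⟩
    obtain ⟨x, f, hx1, hf1, hfx1, rfl⟩ := hrmem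
    set c : 𝕜 := f (T x) with hc
    by_cases hc0 : c = 0
    · -- then ν < δ and the value at lam = 1 is 1 ≥ ν + 1 - δ
      have hν' : ν < δ := by
        rw [hc0] at hrgt; simp at hrgt; linarith
      have h1mem : (1 : 𝕜) ∈ Metric.sphere (0 : 𝕜) 1 := by
        simp [mem_sphere_zero_iff_norm]
      have : ‖f ((T + (1 : 𝕜) • (1 : X →L[𝕜] X)) x)‖ ≤ h 1 :=
        le_nrad _ hx1 hf1 hfx1
      rw [helt 1 x f hx1 hf1 hfx1, ← hc, hc0] at this
      simp only [zero_add, norm_one] at this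
      have hmax := hlam₀max h1mem
      simp only [Set.mem_setOf_eq] at hmax
      linarith
    · -- take lam₁ := (‖c‖⁻¹ : ℝ) * c
      set lam₁ : 𝕜 := ((‖c‖⁻¹ : ℝ) : 𝕜) * c with hlam₁
      have hcnorm : ‖c‖ ≠ 0 := norm_ne_zero_iff.mpr hc0
      have hlam₁norm : ‖lam₁‖ = 1 := by
        rw [hlam₁, norm_mul, RCLike.norm_ofReal, abs_inv, abs_norm]
        field_simp
      have hval : ‖c + lam₁‖ = ‖c‖ + 1 := by
        have : c + lam₁ = (1 + ((‖c‖⁻¹ : ℝ) : 𝕜)) * c := by ring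
        rw [this, norm_mul]
        have h1 : (1 : 𝕜) + ((‖c‖⁻¹ : ℝ) : 𝕜) = (((1 + ‖c‖⁻¹ : ℝ)) : 𝕜) := by
          push_cast; ring
        rw [h1, RCLike.norm_ofReal, abs_of_pos (by positivity)]
        field_simp
      have hmem : lam₁ ∈ Metric.sphere (0 : 𝕜) 1 := by
        simp [mem_sphere_zero_iff_norm, hlam₁norm]
      have h1 : ‖f ((T + lam₁ • (1 : X →L[𝕜] X)) x)‖ ≤ h lam₁ :=
        le_nrad _ hx1 hf1 hfx1
      rw [helt lam₁ x f hx1 hf1 hfx1, ← hc, hval] at h1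
      have hmax := hlam₀max hmem
      simp only [Set.mem_setOf_eq] at hmax
      linarith
  refine ⟨lam₀, hlam₀, ?_⟩
  rw [nrad_one hx hf hfx]
  exact le_antisymm (hub lam₀ hlam₀) hlb

lemma NSet_smul {μ : 𝕜} (hμ : ‖μ‖ = 1) (U : X →L[𝕜] X) : NSet (μ • U) = NSet U := by
  ext r
  constructor
  · rintro ⟨x, f, hx1, hf1, hfx1, rfl⟩
    refine ⟨x, f, hx1, hf1, hfx1, ?_⟩
    simp [ContinuousLinearMap.smul_apply, map_smul, norm_smul, hμ]
  · rintro ⟨x, f, hx1, hf1, hfx1, rfl⟩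
    refine ⟨x, f, hx1, hf1, hfx1, ?_⟩
    simp [ContinuousLinearMap.smul_apply, map_smul, norm_smul, hμ]

lemma nrad_smul {μ : 𝕜} (hμ : ‖μ‖ = 1) (U : X →L[𝕜] X) : nrad (μ • U) = nrad U := by
  rw [nrad_eq_sSup, nrad_eq_sSup, NSet_smul hμ]

lemma NRadParallel.symm {T S : X →L[𝕜] X} (h : NRadParallel T S) : NRadParallel S T := by
  obtain ⟨lam, hlam, heq⟩ := h
  refine ⟨(starRingEnd 𝕜) lam, by rwa [RCLike.norm_conj], ?_⟩
  have key : S + (starRingEnd 𝕜) lam • T = (starRingEnd 𝕜) lam • (T + lam • S) := by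
    rw [smul_add, smul_smul, RCLike.conj_mul, hlam]
    push_cast
    rw [one_pow, one_smul]
    abel
  rw [key, nrad_smul (by rwa [RCLike.norm_conj]) _, heq, add_comm]

end Pair

end NradAux



open RCLike

namespace NradAux

/-- polarization-type identity in an RCLike field -/
lemma norm_sub_sq_coord (a b : 𝕜) :
    ‖a - b‖ ^ 2 = ‖a‖ ^ 2 - 2 * re (a * (starRingEnd 𝕜) b) + ‖b‖ ^ 2 := by
  have key : (a - b) * (starRingEnd 𝕜) (a - b)
      = a * (starRingEnd 𝕜) a + b * (starRingEnd 𝕜) b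
        - (a * (starRingEnd 𝕜) b + (starRingEnd 𝕜) (a * (starRingEnd 𝕜) b)) := by
    rw [map_sub, map_mul, RCLike.conj_conj]
    ring
  have h1 := congrArg (re (K := 𝕜)) key
  rw [RCLike.mul_conj, RCLike.mul_conj, RCLike.mul_conj] at h1
  simp only [map_sub, map_add, ← RCLike.ofReal_pow, RCLike.ofReal_re, RCLike.conj_re] at h1
  linarith

end NradAux

namespace Geom

variable (u₁ u₂ : X)

/-- coordinates-to-vector map -/
def phi (w : 𝕜 × 𝕜) : X := w.1 • u₁ + w.2 • u₂

/-- pushforward norm on `𝕜 × 𝕜` -/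
noncomputable def NN (w : 𝕜 × 𝕜) : ℝ := ‖phi u₁ u₂ w‖

/-- the standard bilinear pairing on `𝕜 × 𝕜` -/
def BB (p w : 𝕜 × 𝕜) : 𝕜 := p.1 * w.1 + p.2 * w.2

/-- dual ball of `NN` -/
def DD : Set (𝕜 × 𝕜) := {p | ∀ w, ‖BB (𝕜 := 𝕜) p w‖ ≤ NN u₁ u₂ w}

variable {u₁ u₂}

section basic

lemma phi_smul (c : 𝕜) (w : 𝕜 × 𝕜) : phi u₁ u₂ (c • w) = c • phi u₁ u₂ w := by
  simp only [phi, Prod.smul_fst, Prod.smul_snd, smul_eq_mul, mul_smul, smul_add]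

lemma NN_smul (c : 𝕜) (w : 𝕜 × 𝕜) : NN u₁ u₂ (c • w) = ‖c‖ * NN u₁ u₂ w := by
  rw [NN, phi_smul, norm_smul, NN]

lemma BB_smul_right (p : 𝕜 × 𝕜) (c : 𝕜) (w : 𝕜 × 𝕜) :
    BB (𝕜 := 𝕜) p (c • w) = c * BB (𝕜 := 𝕜) p w := by
  simp only [BB, Prod.smul_fst, Prod.smul_snd, smul_eq_mul]; ring

lemma BB_smul_left (c : 𝕜) (p w : 𝕜 × 𝕜) :
    BB (𝕜 := 𝕜) (c • p) w = c * BB (𝕜 := 𝕜) p w := by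
  simp only [BB, Prod.smul_fst, Prod.smul_snd, smul_eq_mul]; ring

lemma BB_fst (p : 𝕜 × 𝕜) : BB (𝕜 := 𝕜) p (1, 0) = p.1 := by simp [BB]

lemma BB_snd (p : 𝕜 × 𝕜) : BB (𝕜 := 𝕜) p (0, 1) = p.2 := by simp [BB]

lemma coord_mem_DD (g : X →L[𝕜] 𝕜) (hg : ‖g‖ ≤ 1) :
    (g u₁, g u₂) ∈ DD u₁ u₂ := by
  intro w
  have hBg : BB (𝕜 := 𝕜) (g u₁, g u₂) w = g (phi u₁ u₂ w) := by
    simp only [BB, phi, map_add, map_smul, smul_eq_mul]; ring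
  rw [hBg, NN]
  calc ‖g (phi u₁ u₂ w)‖ ≤ ‖g‖ * ‖phi u₁ u₂ w‖ := g.le_opNorm _
    _ ≤ 1 * ‖phi u₁ u₂ w‖ := by
        exact mul_le_mul_of_nonneg_right hg (norm_nonneg _)
    _ = ‖phi u₁ u₂ w‖ := one_mul _

lemma coord_BB (g : X →L[𝕜] 𝕜) (w : 𝕜 × 𝕜) :
    BB (𝕜 := 𝕜) (g u₁, g u₂) w = g (phi u₁ u₂ w) := by
  simp only [BB, phi, map_add, map_smul, smul_eq_mul]; ring

lemma DD_fst_le {p : 𝕜 × 𝕜} (hp : p ∈ DD u₁ u₂) (h1 : ‖u₁‖ = 1) : ‖p.1‖ ≤ 1 := by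
  have := hp (1, 0)
  rwa [BB_fst, NN, phi, one_smul, zero_smul, add_zero, h1] at this

lemma DD_snd_le {p : 𝕜 × 𝕜} (hp : p ∈ DD u₁ u₂) (h2 : ‖u₂‖ = 1) : ‖p.2‖ ≤ 1 := by
  have := hp (0, 1)
  rwa [BB_snd, NN, phi, one_smul, zero_smul, zero_add, h2] at this

lemma DD_isClosed : IsClosed (DD (𝕜 := 𝕜) u₁ u₂) := by
  have : DD (𝕜 := 𝕜) u₁ u₂ = ⋂ w : 𝕜 × 𝕜, {p | ‖BB (𝕜 := 𝕜) p w‖ ≤ NN u₁ u₂ w} := by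
    ext p; simp [DD, Set.mem_iInter]
  rw [this]
  refine isClosed_iInter fun w => isClosed_le ?_ continuous_const
  exact ((continuous_fst.mul continuous_const).add
    (continuous_snd.mul continuous_const)).norm

lemma DD_isCompact (h1 : ‖u₁‖ = 1) (h2 : ‖u₂‖ = 1) : IsCompact (DD (𝕜 := 𝕜) u₁ u₂) := by
  refine (isCompact_closedBall (0 : 𝕜 × 𝕜) 1).of_isClosed_subset DD_isClosed ?_
  intro p hp
  rw [Metric.mem_closedBall, dist_zero_right, Prod.norm_def]
  exact max_le (DD_fst_le hp h1) (DD_snd_le hp h2)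

lemma DD_convex : Convex ℝ (DD (𝕜 := 𝕜) u₁ u₂) := by
  intro p hp q hq a b ha hb hab
  intro w
  have hcomp : BB (𝕜 := 𝕜) (a • p + b • q) w
      = a • BB (𝕜 := 𝕜) p w + b • BB (𝕜 := 𝕜) q w := by
    have hsm : ∀ (r : ℝ) (z : 𝕜), r • z = (r : 𝕜) * z :=
      fun r z => RCLike.real_smul_eq_coe_mul r z
    simp only [BB, Prod.fst_add, Prod.snd_add, Prod.smul_fst, Prod.smul_snd, hsm]
    ring
  rw [hcomp]
  calc ‖a • BB (𝕜 := 𝕜) p w + b • BB (𝕜 := 𝕜) q w‖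
      ≤ ‖a • BB (𝕜 := 𝕜) p w‖ + ‖b • BB (𝕜 := 𝕜) q w‖ := norm_add_le _ _
    _ = a * ‖BB (𝕜 := 𝕜) p w‖ + b * ‖BB (𝕜 := 𝕜) q w‖ := by
        rw [norm_smul, norm_smul, Real.norm_eq_abs, abs_of_nonneg ha,
          Real.norm_eq_abs, abs_of_nonneg hb]
    _ ≤ a * NN u₁ u₂ w + b * NN u₁ u₂ w := by
        have := hp w; have := hq w
        apply add_le_add <;> apply mul_le_mul_of_nonneg_left <;> first | assumption
    _ = NN u₁ u₂ w := by rw [← add_mul, hab, one_mul]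

end basic

end Geom

namespace Geom

section main

variable {u₁ u₂ : X}

/-- real inner product on `𝕜 × 𝕜` -/
noncomputable def ip (p q : 𝕜 × 𝕜) : ℝ :=
  re (p.1 * (starRingEnd 𝕜) q.1) + re (p.2 * (starRingEnd 𝕜) q.2)

lemma ip_self (p : 𝕜 × 𝕜) : ip (𝕜 := 𝕜) p p = ‖p.1‖ ^ 2 + ‖p.2‖ ^ 2 := by
  simp only [ip, RCLike.mul_conj, ← RCLike.ofReal_pow, RCLike.ofReal_re]

/-- `ip · e` as a real linear map -/
noncomputable def ipL (e : 𝕜 × 𝕜) : (𝕜 × 𝕜) →ₗ[ℝ] ℝ where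
  toFun p := ip p e
  map_add' p q := by
    simp only [ip, Prod.fst_add, Prod.snd_add, add_mul, map_add]
    ring
  map_smul' r p := by
    simp only [ip, Prod.smul_fst, Prod.smul_snd, smul_mul_assoc, RCLike.smul_re,
      smul_eq_mul, RingHom.id_apply]
    ring

lemma ipL_apply (e p : 𝕜 × 𝕜) : ipL e p = ip p e := rfl

lemma NN_pos (hind : ∀ a b : 𝕜, a • u₁ + b • u₂ = 0 → a = 0 ∧ b = 0)
    {w : 𝕜 × 𝕜} (hw : w ≠ 0) : 0 < NN u₁ u₂ w := by
  rw [NN, norm_pos_iff]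
  intro hw0
  obtain ⟨ha, hb⟩ := hind w.1 w.2 hw0
  exact hw (Prod.ext ha hb)

lemma claimA (h1 : ‖u₁‖ = 1) (h2 : ‖u₂‖ = 1)
    (Hbad : ∀ x₁ x₂ : X, ‖x₁‖ = 1 → ‖x₂‖ = 1 → ∀ c : ℝ, c < 2 →
      ∃ g : X →L[𝕜] 𝕜, ‖g‖ ≤ 1 ∧ c < ‖g x₁‖ + ‖g x₂‖)
    (w₁ w₂ : 𝕜 × 𝕜) (hw₁ : NN u₁ u₂ w₁ = 1) (hw₂ : NN u₁ u₂ w₂ = 1) :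
    ∃ p ∈ DD (𝕜 := 𝕜) u₁ u₂, ‖BB (𝕜 := 𝕜) p w₁‖ = 1 ∧ ‖BB (𝕜 := 𝕜) p w₂‖ = 1 := by
  classical
  have H : ∀ n : ℕ, ∃ g : X →L[𝕜] 𝕜, ‖g‖ ≤ 1 ∧
      2 - 1 / ((n : ℝ) + 1) < ‖g (phi u₁ u₂ w₁)‖ + ‖g (phi u₁ u₂ w₂)‖ := by
    intro n
    have hc : 2 - 1 / ((n : ℝ) + 1) < 2 := by
      have : (0 : ℝ) < 1 / ((n : ℝ) + 1) := by positivity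
      linarith
    exact Hbad _ _ hw₁ hw₂ _ hc
  choose g hg1 hg2 using H
  set pseq : ℕ → 𝕜 × 𝕜 := fun n => (g n u₁, g n u₂) with hpseq
  have hmem : ∀ n, pseq n ∈ DD (𝕜 := 𝕜) u₁ u₂ := fun n => coord_mem_DD (g n) (hg1 n)
  obtain ⟨p, hpD, ψ, hψ, hconv⟩ := (DD_isCompact h1 h2).tendsto_subseq hmem
  have hcontB : ∀ v : 𝕜 × 𝕜, Continuous (fun q : 𝕜 × 𝕜 => ‖BB (𝕜 := 𝕜) q v‖) :=
    fun v => ((continuous_fst.mul continuous_const).add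
      (continuous_snd.mul continuous_const)).norm
  have hlim : ∀ v : 𝕜 × 𝕜, Tendsto (fun k => ‖BB (𝕜 := 𝕜) (pseq (ψ k)) v‖)
      atTop (𝓝 ‖BB (𝕜 := 𝕜) p v‖) := by
    intro v
    exact (((hcontB v).tendsto p).comp hconv)
  have hone : Tendsto (fun k : ℕ => 1 - 1 / ((k : ℝ) + 1)) atTop (𝓝 1) := by
    have : Tendsto (fun n : ℕ => 1 / ((n : ℝ) + 1)) atTop (𝓝 0) :=
      tendsto_one_div_add_atTop_nhds_zero_nat
    have h := tendsto_const_nhds (x := (1 : ℝ)) (f := atTop (α := ℕ))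
    simpa using h.sub this
  have hbound : ∀ (v : 𝕜 × 𝕜), NN u₁ u₂ v = 1 →
      (∀ k : ℕ, 1 - 1 / ((k : ℝ) + 1) ≤ ‖BB (𝕜 := 𝕜) (pseq (ψ k)) v‖) →
      ‖BB (𝕜 := 𝕜) p v‖ = 1 := by
    intro v hv hk
    have hle : ‖BB (𝕜 := 𝕜) p v‖ ≤ 1 := by
      have := hpD v; rwa [hv] at this
    have hge : 1 ≤ ‖BB (𝕜 := 𝕜) p v‖ :=
      le_of_tendsto_of_tendsto' hone (hlim v) hk
    linarith
  have hkey : ∀ k : ℕ, 1 - 1 / ((k : ℝ) + 1) ≤ ‖BB (𝕜 := 𝕜) (pseq (ψ k)) w₁‖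
      ∧ 1 - 1 / ((k : ℝ) + 1) ≤ ‖BB (𝕜 := 𝕜) (pseq (ψ k)) w₂‖ := by
    intro k
    set n := ψ k with hn
    have hB1 : BB (𝕜 := 𝕜) (pseq n) w₁ = g n (phi u₁ u₂ w₁) := coord_BB (g n) w₁
    have hB2 : BB (𝕜 := 𝕜) (pseq n) w₂ = g n (phi u₁ u₂ w₂) := coord_BB (g n) w₂
    have hs := hg2 n
    have hb1 : ‖BB (𝕜 := 𝕜) (pseq n) w₁‖ ≤ 1 := by
      have := hmem n w₁; rwa [hw₁] at this
    have hb2 : ‖BB (𝕜 := 𝕜) (pseq n) w₂‖ ≤ 1 := by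
      have := hmem n w₂; rwa [hw₂] at this
    have hnk : 1 / ((n : ℝ) + 1) ≤ 1 / ((k : ℝ) + 1) := by
      apply one_div_le_one_div_of_le
      · positivity
      · have : k ≤ n := hψ.le_apply
        have : (k : ℝ) ≤ (n : ℝ) := by exact_mod_cast this
        linarith
    rw [← hB1, ← hB2] at hs
    constructor <;> linarith
  exact ⟨p, hpD, hbound w₁ hw₁ (fun k => (hkey k).1), hbound w₂ hw₂ (fun k => (hkey k).2)⟩

end main

end Geom

namespace Geom

section master

variable {u₁ u₂ : X}

lemma NN_e1 (h1 : ‖u₁‖ = 1) : NN (𝕜 := 𝕜) u₁ u₂ (1, 0) = 1 := by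
  rw [NN, phi, one_smul, zero_smul, add_zero, h1]

lemma NN_e2 (h2 : ‖u₂‖ = 1) : NN (𝕜 := 𝕜) u₁ u₂ (0, 1) = 1 := by
  rw [NN, phi, one_smul, zero_smul, zero_add, h2]

lemma exists_good_pair (h1 : ‖u₁‖ = 1) (h2 : ‖u₂‖ = 1)
    (hind : ∀ a b : 𝕜, a • u₁ + b • u₂ = 0 → a = 0 ∧ b = 0) :
    ∃ x₁ x₂ : X, ‖x₁‖ = 1 ∧ ‖x₂‖ = 1 ∧ ∃ c : ℝ, c < 2 ∧
      ∀ g : X →L[𝕜] 𝕜, ‖g‖ ≤ 1 → ‖g x₁‖ + ‖g x₂‖ ≤ c := by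
  classical
  by_contra hcon
  push_neg at hcon
  have Hbad : ∀ x₁ x₂ : X, ‖x₁‖ = 1 → ‖x₂‖ = 1 → ∀ c : ℝ, c < 2 →
      ∃ g : X →L[𝕜] 𝕜, ‖g‖ ≤ 1 ∧ c < ‖g x₁‖ + ‖g x₂‖ := by
    intro x₁ x₂ hx₁ hx₂ c hc
    obtain ⟨g, hgle, hgsum⟩ := hcon x₁ x₂ hx₁ hx₂ c hc
    exact ⟨g, hgle, hgsum⟩
  -- maximize the euclidean functional over the dual ball
  set Φ : 𝕜 × 𝕜 → ℝ := fun p => ‖p.1‖ ^ 2 + ‖p.2‖ ^ 2 with hΦ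
  have hΦcont : Continuous Φ := by
    exact ((continuous_fst.norm.pow 2).add (continuous_snd.norm.pow 2))
  have h0D : (0 : 𝕜 × 𝕜) ∈ DD (𝕜 := 𝕜) u₁ u₂ := by
    intro w
    simp only [BB, Prod.fst_zero, Prod.snd_zero, zero_mul, add_zero, norm_zero]
    exact norm_nonneg _
  obtain ⟨e, heD, hemax⟩ := (DD_isCompact h1 h2).exists_isMaxOn ⟨0, h0D⟩
    hΦcont.continuousOn
  set M : ℝ := Φ e with hM
  -- Claim B : e pairs to 1 with every NN-unit vector
  have claimB : ∀ x : 𝕜 × 𝕜, NN u₁ u₂ x = 1 → ‖BB (𝕜 := 𝕜) e x‖ = 1 := by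
    intro x hx
    set S : Set (𝕜 × 𝕜) := {p | p ∈ DD (𝕜 := 𝕜) u₁ u₂ ∧ ‖BB (𝕜 := 𝕜) p x‖ = 1} with hS
    have hSD : S ⊆ DD (𝕜 := 𝕜) u₁ u₂ := fun p hp => hp.1
    have hSclosed : IsClosed S := by
      refine DD_isClosed.inter ?_
      exact isClosed_eq (((continuous_fst.mul continuous_const).add
        (continuous_snd.mul continuous_const)).norm) continuous_const
    have hSne : S.Nonempty := by
      obtain ⟨p, hpD, hpx, _⟩ := claimA h1 h2 Hbad x x hx hx
      exact ⟨p, hpD, hpx⟩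
    -- the dual ball is contained in the closed convex hull of S
    have hDsub : DD (𝕜 := 𝕜) u₁ u₂ ⊆ closure (convexHull ℝ S) := by
      by_contra hns
      rw [Set.not_subset] at hns
      obtain ⟨q, hqD, hqn⟩ := hns
      obtain ⟨f, u, hfu, hufq⟩ := geometric_hahn_banach_closed_point
        ((convex_convexHull ℝ S).closure) isClosed_closure hqn
      set G : (𝕜 × 𝕜) →ₗ[𝕜] 𝕜 := LinearMap.extendTo𝕜' (f : (𝕜 × 𝕜) →ₗ[ℝ] ℝ) with hG
      have hGre : ∀ p : 𝕜 × 𝕜, re (G p) = f p := fun p =>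
        LinearMap.extendTo𝕜'_apply_re _ p
      set y : 𝕜 × 𝕜 := (G (1, 0), G (0, 1)) with hy
      have hGB : ∀ p : 𝕜 × 𝕜, G p = BB (𝕜 := 𝕜) p y := by
        intro p
        have hp : p = p.1 • ((1 : 𝕜), (0 : 𝕜)) + p.2 • ((0 : 𝕜), (1 : 𝕜)) := by
          ext <;> simp
        calc G p = G (p.1 • ((1 : 𝕜), (0 : 𝕜)) + p.2 • ((0 : 𝕜), (1 : 𝕜))) := by
              rw [← hp]
          _ = p.1 * G (1, 0) + p.2 * G (0, 1) := by
              rw [map_add, map_smul, map_smul, smul_eq_mul, smul_eq_mul]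
          _ = BB (𝕜 := 𝕜) p y := by simp [BB, hy]
      by_cases hy0 : y = 0
      · obtain ⟨s₀, hs₀⟩ := hSne
        have ha : f s₀ < u := hfu s₀ (subset_closure (subset_convexHull ℝ S hs₀))
        have hb : f s₀ = 0 := by
          rw [← hGre s₀, hGB s₀, hy0]; simp [BB]
        have hc : f q = 0 := by
          rw [← hGre q, hGB q, hy0]; simp [BB]
        rw [hb] at ha; rw [hc] at hufq; linarith
      · have hNy : 0 < NN u₁ u₂ y := NN_pos hind hy0
        set z : 𝕜 × 𝕜 := (((NN u₁ u₂ y)⁻¹ : ℝ) : 𝕜) • y with hz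
        have hz1 : NN u₁ u₂ z = 1 := by
          rw [hz, NN_smul, RCLike.norm_ofReal, abs_inv, abs_of_pos hNy]
          field_simp
        obtain ⟨p, hpD, hpx, hpz⟩ := claimA h1 h2 Hbad x z hx hz1
        have hyz : ((NN u₁ u₂ y : ℝ) : 𝕜) • z = y := by
          rw [hz, smul_smul, ← RCLike.ofReal_mul]
          rw [mul_inv_cancel₀ (ne_of_gt hNy)]
          simp
        have hBpy : BB (𝕜 := 𝕜) p y = ((NN u₁ u₂ y : ℝ) : 𝕜) * BB (𝕜 := 𝕜) p z := by
          rw [← hyz, BB_smul_right, hyz]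
        have hnormBy : ‖BB (𝕜 := 𝕜) p y‖ = NN u₁ u₂ y := by
          rw [hBpy, norm_mul, RCLike.norm_ofReal, abs_of_pos hNy, hpz, mul_one]
        set d : 𝕜 := BB (𝕜 := 𝕜) p y with hd
        have hd0 : d ≠ 0 := by
          rw [← norm_pos_iff, hnormBy]; exact hNy
        have hdn : ‖d‖ ≠ 0 := norm_ne_zero_iff.mpr hd0
        set θ : 𝕜 := (starRingEnd 𝕜) d * ((‖d‖⁻¹ : ℝ) : 𝕜) with hθ
        have hθ1 : ‖θ‖ = 1 := by
          rw [hθ, norm_mul, RCLike.norm_conj, RCLike.norm_ofReal, abs_inv, abs_norm]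
          field_simp
        have hθd : θ * d = ((‖d‖ : ℝ) : 𝕜) := by
          have hcm : (starRingEnd 𝕜) d * d = ((‖d‖ : ℝ) : 𝕜) ^ 2 := RCLike.conj_mul d
          have hr : (‖d‖ : ℝ) ^ 2 * ‖d‖⁻¹ = ‖d‖ := by field_simp
          calc θ * d = ((starRingEnd 𝕜) d * d) * ((‖d‖⁻¹ : ℝ) : 𝕜) := by
                rw [hθ]; ring
            _ = ((‖d‖ : ℝ) : 𝕜) := by
                rw [hcm, ← RCLike.ofReal_pow, ← RCLike.ofReal_mul, hr]
        set p' : 𝕜 × 𝕜 := θ • p with hp'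
        have hp'D : p' ∈ DD (𝕜 := 𝕜) u₁ u₂ := by
          intro w
          rw [hp', BB_smul_left, norm_mul, hθ1, one_mul]
          exact hpD w
        have hp'S : p' ∈ S := by
          refine ⟨hp'D, ?_⟩
          rw [hp', BB_smul_left, norm_mul, hθ1, one_mul, hpx]
        have hfp' : f p' = NN u₁ u₂ y := by
          rw [← hGre p', hGB p', hp', BB_smul_left, ← hd, hθd, RCLike.ofReal_re,
            hnormBy]
        have hfq : f q ≤ NN u₁ u₂ y := by
          rw [← hGre q, hGB q]
          exact (RCLike.re_le_norm _).trans (hqD y)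
        have := hfu p' (subset_closure (subset_convexHull ℝ S hp'S))
        linarith
    -- concentration argument : e belongs to S
    have heS : e ∈ S := by
      have : e ∈ closure S := by
        rw [Metric.mem_closure_iff]
        intro ε hε
        set δ : ℝ := ε ^ 2 / 8 with hδdef
        have hδ : 0 < δ := by positivity
        obtain ⟨z, hzconv, hzdist⟩ := Metric.mem_closure_iff.mp (hDsub heD) δ hδ
        rw [convexHull_eq] at hzconv
        obtain ⟨ι, t, w, zf, hw0, hw1, hzf, hcen⟩ := hzconv
        have hzsum : z = ∑ i ∈ t, w i • zf i := by
          rw [← hcen, Finset.centerMass_eq_of_sum_1 _ _ hw1]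
        -- lower bound for ip z e
        have hiz : ip (𝕜 := 𝕜) z e = ∑ i ∈ t, w i * ip (𝕜 := 𝕜) (zf i) e := by
          rw [hzsum, ← ipL_apply (𝕜 := 𝕜) e, map_sum]
          refine Finset.sum_congr rfl fun i _ => ?_
          rw [map_smul, smul_eq_mul, ipL_apply]
        have hediff : ip (𝕜 := 𝕜) (z - e) e = ip (𝕜 := 𝕜) z e - ip (𝕜 := 𝕜) e e := by
          rw [← ipL_apply (𝕜 := 𝕜) e, map_sub, ipL_apply, ipL_apply]
        have hcoord1 : ‖(z - e).1‖ ≤ δ := by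
          have := norm_fst_le (z - e)
          have hde : ‖z - e‖ ≤ δ := by
            rw [← dist_eq_norm, dist_comm]
            exact le_of_lt hzdist
          exact this.trans hde
        have hcoord2 : ‖(z - e).2‖ ≤ δ := by
          have := norm_snd_le (z - e)
          have hde : ‖z - e‖ ≤ δ := by
            rw [← dist_eq_norm, dist_comm]
            exact le_of_lt hzdist
          exact this.trans hde
        have he1le : ‖e.1‖ ≤ 1 := DD_fst_le heD h1
        have he2le : ‖e.2‖ ≤ 1 := DD_snd_le heD h2
        have hipbound : |ip (𝕜 := 𝕜) (z - e) e| ≤ 2 * δ := by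
          have b1 : |re ((z - e).1 * (starRingEnd 𝕜) e.1)| ≤ δ * 1 := by
            refine (RCLike.abs_re_le_norm _).trans ?_
            rw [norm_mul, RCLike.norm_conj]
            exact mul_le_mul hcoord1 he1le (norm_nonneg _) (le_of_lt hδ)
          have b2 : |re ((z - e).2 * (starRingEnd 𝕜) e.2)| ≤ δ * 1 := by
            refine (RCLike.abs_re_le_norm _).trans ?_
            rw [norm_mul, RCLike.norm_conj]
            exact mul_le_mul hcoord2 he2le (norm_nonneg _) (le_of_lt hδ)
          rw [ip]
          calc |re ((z - e).1 * (starRingEnd 𝕜) e.1) +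
              re ((z - e).2 * (starRingEnd 𝕜) e.2)|
              ≤ |re ((z - e).1 * (starRingEnd 𝕜) e.1)| +
                |re ((z - e).2 * (starRingEnd 𝕜) e.2)| := abs_add_le _ _
            _ ≤ 2 * δ := by linarith
        have hipz : M - 2 * δ ≤ ip (𝕜 := 𝕜) z e := by
          have hipee : ip (𝕜 := 𝕜) e e = M := by rw [ip_self, hM, hΦ]
          have := abs_le.mp hipbound
          rw [← hipee]
          linarith [this.1, hediff]
        -- find a good point of S
        obtain ⟨i, hit, hwi, hipi⟩ : ∃ i ∈ t, 0 < w i ∧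
            M - 2 * δ ≤ ip (𝕜 := 𝕜) (zf i) e := by
          by_contra hno
          push_neg at hno
          have hex : ∃ j ∈ t, 0 < w j := by
            by_contra hh
            push_neg at hh
            have : ∑ i ∈ t, w i ≤ 0 :=
              Finset.sum_nonpos fun i hi => hh i hi
            rw [hw1] at this; linarith
          obtain ⟨j, hjt, hwj⟩ := hex
          have hsum : ∑ i ∈ t, w i * ip (𝕜 := 𝕜) (zf i) e <
              ∑ i ∈ t, w i * (M - 2 * δ) := by
            refine Finset.sum_lt_sum (fun i hi => ?_) ⟨j, hjt, ?_⟩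
            · rcases (hw0 i hi).lt_or_eq with hpos | heq
              · exact mul_le_mul_of_nonneg_left (le_of_lt (hno i hi hpos))
                  (le_of_lt hpos)
              · rw [← heq, zero_mul, zero_mul]
            · exact mul_lt_mul_of_pos_left (hno j hjt hwj) hwj
          rw [← Finset.sum_mul, hw1, one_mul, ← hiz] at hsum
          linarith
        have hsS : zf i ∈ S := hzf i hit
        have hΦi : Φ (zf i) ≤ M := hemax (hSD hsS)
        have hkey : Φ (zf i - e) ≤ 4 * δ := by
          have hexp : Φ (zf i - e) = Φ (zf i) - 2 * ip (𝕜 := 𝕜) (zf i) e + Φ e := by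
            simp only [hΦ, ip, Prod.fst_sub, Prod.snd_sub]
            rw [NradAux.norm_sub_sq_coord, NradAux.norm_sub_sq_coord]
            ring
          rw [hexp]
          have hM' : Φ e = M := rfl
          linarith
        have hcc1 : ‖(zf i - e).1‖ < ε := by
          have hn1 : (0:ℝ) ≤ ‖(zf i - e).1‖ := norm_nonneg _
          have hn2 : (0:ℝ) ≤ ‖(zf i - e).2‖ ^ 2 := sq_nonneg _
          have : ‖(zf i - e).1‖ ^ 2 ≤ 4 * δ := by
            have := hkey; simp only [hΦ] at this; linarith
          rw [hδdef] at this
          nlinarith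
        have hcc2 : ‖(zf i - e).2‖ < ε := by
          have hn1 : (0:ℝ) ≤ ‖(zf i - e).2‖ := norm_nonneg _
          have hn2 : (0:ℝ) ≤ ‖(zf i - e).1‖ ^ 2 := sq_nonneg _
          have : ‖(zf i - e).2‖ ^ 2 ≤ 4 * δ := by
            have := hkey; simp only [hΦ] at this; linarith
          rw [hδdef] at this
          nlinarith
        refine ⟨zf i, hsS, ?_⟩
        rw [Prod.dist_eq]
        refine max_lt ?_ ?_
        · rw [dist_eq_norm, ← norm_neg]
          have : -(e.1 - (zf i).1) = (zf i - e).1 := by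
            simp [Prod.fst_sub]
          rw [this]; exact hcc1
        · rw [dist_eq_norm, ← norm_neg]
          have : -(e.2 - (zf i).2) = (zf i - e).2 := by
            simp [Prod.snd_sub]
          rw [this]; exact hcc2
      rwa [hSclosed.closure_eq] at this
    exact heS.2
  -- derive the contradiction
  have he1 : ‖e.1‖ = 1 := by
    have := claimB (1, 0) (NN_e1 h1)
    rwa [BB_fst] at this
  have he2 : ‖e.2‖ = 1 := by
    have := claimB (0, 1) (NN_e2 h2)
    rwa [BB_snd] at this
  set y₀ : 𝕜 × 𝕜 := (-e.2, e.1) with hy₀def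
  have hy₀ : y₀ ≠ 0 := by
    intro h
    have : e.1 = 0 := congrArg Prod.snd h
    rw [this] at he1; simp at he1
  have hNy₀ : 0 < NN u₁ u₂ y₀ := NN_pos hind hy₀
  set x₀ : 𝕜 × 𝕜 := (((NN u₁ u₂ y₀)⁻¹ : ℝ) : 𝕜) • y₀ with hx₀def
  have hx₀1 : NN u₁ u₂ x₀ = 1 := by
    rw [hx₀def, NN_smul, RCLike.norm_ofReal, abs_inv, abs_of_pos hNy₀]
    field_simp
  have hB0 : BB (𝕜 := 𝕜) e x₀ = 0 := by
    rw [hx₀def, BB_smul_right]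
    have : BB (𝕜 := 𝕜) e y₀ = 0 := by
      simp only [BB, hy₀def]
      ring
    rw [this, mul_zero]
  have := claimB x₀ hx₀1
  rw [hB0] at this
  simp at this

end master

end Geom


namespace NradAux

section final

variable {x₁ x₂ : X} {f₁ f₂ : X →L[𝕜] 𝕜}

/-- the rank one operator `f ⊗ x` has numerical radius one when `f ∈ J(x)`. -/
lemma nrad_rankone (hx : ‖x₁‖ = 1) (hf : ‖f₁‖ = 1) (hfx : f₁ x₁ = 1) :
    nrad (f₁.smulRight x₁) = 1 := by
  refine le_antisymm (nrad_le _ zero_le_one ?_) ?_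
  · intro x f hx1 hf1 hfx1
    rw [ContinuousLinearMap.smulRight_apply, map_smul, smul_eq_mul, norm_mul]
    have ha : ‖f₁ x‖ ≤ 1 := by
      calc ‖f₁ x‖ ≤ ‖f₁‖ * ‖x‖ := f₁.le_opNorm x
        _ = 1 := by rw [hf, hx1, mul_one]
    have hb : ‖f x₁‖ ≤ 1 := by
      calc ‖f x₁‖ ≤ ‖f‖ * ‖x₁‖ := f.le_opNorm x₁
        _ = 1 := by rw [hf1, hx, mul_one]
    calc ‖f₁ x‖ * ‖f x₁‖ ≤ 1 * 1 :=
          mul_le_mul ha hb (norm_nonneg _) zero_le_one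
      _ = 1 := one_mul 1
  · have := le_nrad (f₁.smulRight x₁) hx hf hfx
    rwa [ContinuousLinearMap.smulRight_apply, hfx, one_smul, hfx, norm_one] at this

lemma not_parallel_rankone (hx₁ : ‖x₁‖ = 1) (hx₂ : ‖x₂‖ = 1)
    (hf₁ : ‖f₁‖ = 1) (hf₂ : ‖f₂‖ = 1) (hfx₁ : f₁ x₁ = 1) (hfx₂ : f₂ x₂ = 1)
    {c : ℝ} (hc : c < 2)
    (hbound : ∀ g : X →L[𝕜] 𝕜, ‖g‖ ≤ 1 → ‖g x₁‖ + ‖g x₂‖ ≤ c) :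
    ¬ NRadParallel (f₁.smulRight x₁) (f₂.smulRight x₂) := by
  rintro ⟨lam, hlam, heq⟩
  rw [nrad_rankone hx₁ hf₁ hfx₁, nrad_rankone hx₂ hf₂ hfx₂] at heq
  have hc0 : (0 : ℝ) ≤ c := by
    have := hbound f₁ (le_of_eq hf₁)
    have h1 : ‖f₁ x₁‖ = 1 := by rw [hfx₁, norm_one]
    rw [h1] at this
    have := norm_nonneg (f₁ x₂)
    linarith
  have hub : nrad (f₁.smulRight x₁ + lam • f₂.smulRight x₂) ≤ c := by
    refine nrad_le _ hc0 ?_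
    intro x f hx1 hf1 hfx1
    have happ : f ((f₁.smulRight x₁ + lam • f₂.smulRight x₂) x)
        = f₁ x * f x₁ + lam * (f₂ x * f x₂) := by
      simp only [ContinuousLinearMap.add_apply, ContinuousLinearMap.smul_apply,
        ContinuousLinearMap.smulRight_apply, map_add, map_smul, smul_eq_mul]
    rw [happ]
    have ha : ‖f₁ x‖ ≤ 1 := by
      calc ‖f₁ x‖ ≤ ‖f₁‖ * ‖x‖ := f₁.le_opNorm x
        _ = 1 := by rw [hf₁, hx1, mul_one]
    have hb : ‖f₂ x‖ ≤ 1 := by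
      calc ‖f₂ x‖ ≤ ‖f₂‖ * ‖x‖ := f₂.le_opNorm x
        _ = 1 := by rw [hf₂, hx1, mul_one]
    calc ‖f₁ x * f x₁ + lam * (f₂ x * f x₂)‖
        ≤ ‖f₁ x * f x₁‖ + ‖lam * (f₂ x * f x₂)‖ := norm_add_le _ _
      _ = ‖f₁ x‖ * ‖f x₁‖ + ‖f₂ x‖ * ‖f x₂‖ := by
          rw [norm_mul, norm_mul, norm_mul, hlam, one_mul]
      _ ≤ 1 * ‖f x₁‖ + 1 * ‖f x₂‖ := by
          have := norm_nonneg (f x₁); have := norm_nonneg (f x₂)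
          have h1 := mul_le_mul_of_nonneg_right ha (norm_nonneg (f x₁))
          have h2 := mul_le_mul_of_nonneg_right hb (norm_nonneg (f x₂))
          linarith
      _ = ‖f x₁‖ + ‖f x₂‖ := by ring
      _ ≤ c := hbound f (le_of_eq hf1)
  rw [heq] at hub
  linarith

end final

end NradAux

theorem stmt12 (hdim : 2 ≤ Module.rank 𝕜 X) :
    ∃ T S R : X →L[𝕜] X, T ≠ 0 ∧ S ≠ 0 ∧ R ≠ 0 ∧
      NRadParallel T S ∧ NRadParallel S R ∧ ¬ NRadParallel T R := by
  classical
  -- extract two independent unit vectors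
  have hnot : ¬ (Module.rank 𝕜 X ≤ 1) := by
    intro h
    have h2 := hdim.trans h
    norm_num at h2
  rw [rank_le_one_iff] at hnot
  push_neg at hnot
  obtain ⟨a₀, ha₀⟩ := hnot 0
  have ha0 : a₀ ≠ 0 := fun h => ha₀ 0 (by rw [h, smul_zero])
  obtain ⟨b₀, hb₀⟩ := hnot a₀
  have hb0 : b₀ ≠ 0 := fun h => hb₀ 0 (by rw [h, zero_smul])
  set c₁ : 𝕜 := ((‖a₀‖⁻¹ : ℝ) : 𝕜) with hc₁
  set c₂ : 𝕜 := ((‖b₀‖⁻¹ : ℝ) : 𝕜) with hc₂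
  have hc₁0 : c₁ ≠ 0 := by
    rw [hc₁]
    simp [norm_ne_zero_iff.mpr ha0]
  have hc₂0 : c₂ ≠ 0 := by
    rw [hc₂]
    simp [norm_ne_zero_iff.mpr hb0]
  set u₁ : X := c₁ • a₀ with hu₁
  set u₂ : X := c₂ • b₀ with hu₂
  have h1 : ‖u₁‖ = 1 := by
    rw [hu₁, norm_smul, hc₁, RCLike.norm_ofReal, abs_inv, abs_norm]
    exact inv_mul_cancel₀ (norm_ne_zero_iff.mpr ha0)
  have h2 : ‖u₂‖ = 1 := by
    rw [hu₂, norm_smul, hc₂, RCLike.norm_ofReal, abs_inv, abs_norm]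
    exact inv_mul_cancel₀ (norm_ne_zero_iff.mpr hb0)
  have hind : ∀ a b : 𝕜, a • u₁ + b • u₂ = 0 → a = 0 ∧ b = 0 := by
    intro a b hab
    rw [hu₁, hu₂, smul_smul, smul_smul] at hab
    by_cases hbz : b * c₂ = 0
    · have hb' : b = 0 := by
        rcases mul_eq_zero.mp hbz with h | h
        · exact h
        · exact absurd h hc₂0
      refine ⟨?_, hb'⟩
      rw [hb', zero_mul, zero_smul, add_zero] at hab
      rcases smul_eq_zero.mp hab with h | h
      · rcases mul_eq_zero.mp h with h' | h'
        · exact h'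
        · exact absurd h' hc₁0
      · exact absurd h ha0
    · exfalso
      apply hb₀ (-( (b * c₂)⁻¹ * (a * c₁)))
      have : (b * c₂) • b₀ = -((a * c₁) • a₀) := by
        rw [eq_neg_iff_add_eq_zero, add_comm]
        exact hab
      have hb₀eq : b₀ = (b * c₂)⁻¹ • ((b * c₂) • b₀) := by
        rw [smul_smul, inv_mul_cancel₀ hbz, one_smul]
      rw [this, smul_neg, smul_smul] at hb₀eq
      rw [neg_smul]
      exact hb₀eq.symm
  -- the good pair
  obtain ⟨y₁, y₂, hy₁, hy₂, c, hc, hbound⟩ := Geom.exists_good_pair h1 h2 hind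
  -- norming functionals
  obtain ⟨f₁, hf₁, hfx₁'⟩ := exists_dual_vector 𝕜 y₁ (by rw [← norm_ne_zero_iff, hy₁]; norm_num)
  obtain ⟨f₂, hf₂, hfx₂'⟩ := exists_dual_vector 𝕜 y₂ (by rw [← norm_ne_zero_iff, hy₂]; norm_num)
  have hfx₁ : f₁ y₁ = 1 := by rw [hfx₁', hy₁]; norm_num
  have hfx₂ : f₂ y₂ = 1 := by rw [hfx₂', hy₂]; norm_num
  set T : X →L[𝕜] X := f₁.smulRight y₁ with hT
  set R : X →L[𝕜] X := f₂.smulRight y₂ with hR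
  have hy₁0 : y₁ ≠ 0 := by rw [← norm_ne_zero_iff, hy₁]; norm_num
  have hy₂0 : y₂ ≠ 0 := by rw [← norm_ne_zero_iff, hy₂]; norm_num
  refine ⟨T, 1, R, ?_, ?_, ?_, ?_, ?_, ?_⟩
  · intro h
    have : T y₁ = 0 := by rw [h]; rfl
    rw [hT, ContinuousLinearMap.smulRight_apply, hfx₁, one_smul] at this
    exact hy₁0 this
  · intro h
    have : (1 : X →L[𝕜] X) y₁ = 0 := by rw [h]; rfl
    rw [ContinuousLinearMap.one_apply] at this
    exact hy₁0 this
  · intro h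
    have : R y₂ = 0 := by rw [h]; rfl
    rw [hR, ContinuousLinearMap.smulRight_apply, hfx₂, one_smul] at this
    exact hy₂0 this
  · exact NradAux.parallel_one T hy₁ hf₁ hfx₁
  · exact NradAux.NRadParallel.symm (NradAux.parallel_one R hy₁ hf₁ hfx₁)
  · exact NradAux.not_parallel_rankone hy₁ hy₂ hf₁ hf₂ hfx₁ hfx₂ hc hbound
end

section
/- Let X be a smooth normed space (every point of S_X is a smooth point). If x, y ∈ X satisfy ‖x + λy‖ = ‖x‖ + ‖y‖ for some unimodular λ, then for any x* ∈ J(x) and y* ∈ J(y), the operators x*(·)x and y*(·)y are numerical radius parallel. -/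
open Filter Topology

variable {𝕜 : Type*} [RCLike 𝕜] {X : Type*} [NormedAddCommGroup X] [NormedSpace 𝕜 X]

lemma nrad_le_norm (T : X →L[𝕜] X) : nrad T ≤ ‖T‖ := by
  apply Real.sSup_le
  · rintro r ⟨z, φ, hz, hφ, hφz, rfl⟩
    calc ‖φ (T z)‖ ≤ ‖φ‖ * ‖T z‖ := φ.le_opNorm _
      _ = ‖T z‖ := by rw [hφ, one_mul]
      _ ≤ ‖T‖ * ‖z‖ := T.le_opNorm z
      _ = ‖T‖ := by rw [hz, mul_one]
  · exact norm_nonneg T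

lemma nrad_bddAbove (T : X →L[𝕜] X) :
    BddAbove {r : ℝ | ∃ (x : X) (f : X →L[𝕜] 𝕜), ‖x‖ = 1 ∧ ‖f‖ = 1 ∧ f x = 1 ∧ r = ‖f (T x)‖} := by
  refine ⟨‖T‖, ?_⟩
  rintro r ⟨z, φ, hz, hφ, hφz, rfl⟩
  calc ‖φ (T z)‖ ≤ ‖φ‖ * ‖T z‖ := φ.le_opNorm _
    _ = ‖T z‖ := by rw [hφ, one_mul]
    _ ≤ ‖T‖ * ‖z‖ := T.le_opNorm z
    _ = ‖T‖ := by rw [hz, mul_one]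

lemma le_nrad (T : X →L[𝕜] X) {z : X} {φ : X →L[𝕜] 𝕜}
    (hz : ‖z‖ = 1) (hφ : ‖φ‖ = 1) (hφz : φ z = 1) : ‖φ (T z)‖ ≤ nrad T :=
  le_csSup (nrad_bddAbove T) ⟨z, φ, hz, hφ, hφz, rfl⟩

lemma nrad_nonneg (T : X →L[𝕜] X) : 0 ≤ nrad T :=
  Real.sSup_nonneg (by rintro r ⟨z, φ, _, _, _, rfl⟩; positivity)

lemma nrad_smulRight (f : X →L[𝕜] 𝕜) (x : X) (hf : ‖f‖ = 1) (hfx : f x = (‖x‖ : 𝕜)) :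
    nrad (f.smulRight x) = ‖x‖ := by
  refine le_antisymm ?_ ?_
  · calc nrad (f.smulRight x) ≤ ‖f.smulRight x‖ := nrad_le_norm _
      _ = ‖f‖ * ‖x‖ := f.norm_smulRight_apply x
      _ = ‖x‖ := by rw [hf, one_mul]
  · rcases eq_or_ne x 0 with rfl | hx
    · simpa using nrad_nonneg (f.smulRight (0 : X))
    · have hxn : (0 : ℝ) < ‖x‖ := norm_pos_iff.2 hx
      set z : X := ((‖x‖ : 𝕜))⁻¹ • x with hzdef
      have hznorm : ‖z‖ = 1 := by
        rw [hzdef, norm_smul, norm_inv, RCLike.norm_ofReal, abs_of_pos hxn,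
          inv_mul_cancel₀ hxn.ne']
      have hfz : f z = 1 := by
        rw [hzdef, map_smul, smul_eq_mul, hfx, inv_mul_cancel₀]
        exact_mod_cast hxn.ne'
      have := le_nrad (f.smulRight x) hznorm hf hfz
      simpa [ContinuousLinearMap.smulRight_apply, hfz, hfx, abs_of_pos hxn] using this

theorem stmt13
    (hsmooth : ∀ x : X, ‖x‖ = 1 → ∃! f : X →L[𝕜] 𝕜, ‖f‖ = 1 ∧ f x = 1)
    (x y : X) (hpar : ∃ lam : 𝕜, ‖lam‖ = 1 ∧ ‖x + lam • y‖ = ‖x‖ + ‖y‖)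
    (f g : X →L[𝕜] 𝕜)
    (hf1 : ‖f‖ = 1) (hfx : f x = (‖x‖ : 𝕜))
    (hg1 : ‖g‖ = 1) (hgy : g y = (‖y‖ : 𝕜)) :
    NRadParallel (f.smulRight x) (g.smulRight y) := by
  refine ⟨1, norm_one, ?_⟩
  rw [one_smul, nrad_smulRight f x hf1 hfx, nrad_smulRight g y hg1 hgy]
  rcases eq_or_ne x 0 with rfl | hx
  · have hT : f.smulRight (0 : X) = 0 := by ext z; simp
    rw [hT, zero_add, nrad_smulRight g y hg1 hgy, norm_zero, zero_add]
  rcases eq_or_ne y 0 with rfl | hy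
  · have hS : g.smulRight (0 : X) = 0 := by ext z; simp
    rw [hS, add_zero, nrad_smulRight f x hf1 hfx, norm_zero, add_zero]
  obtain ⟨lam, hlam, hnorm⟩ := hpar
  have hxn : (0 : ℝ) < ‖x‖ := norm_pos_iff.2 hx
  have hyn : (0 : ℝ) < ‖y‖ := norm_pos_iff.2 hy
  set c : ℝ := ‖x‖ + ‖y‖ with hc
  have hcpos : (0 : ℝ) < c := by positivity
  set u0 : X := x + lam • y with hu0
  have hu0norm : ‖u0‖ = c := hnorm
  have hu0ne : u0 ≠ 0 := by
    intro h; rw [h, norm_zero] at hu0norm; exact hcpos.ne hu0norm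
  obtain ⟨φ, hφ1, hφu0⟩ := exists_dual_vector 𝕜 u0 (norm_ne_zero_iff.2 hu0ne)
  rw [hu0norm] at hφu0
  -- φ x = ‖x‖ and φ (lam • y) = ‖y‖
  have hrex : RCLike.re (φ x) ≤ ‖x‖ := by
    calc RCLike.re (φ x) ≤ ‖φ x‖ := RCLike.re_le_norm _
      _ ≤ ‖φ‖ * ‖x‖ := φ.le_opNorm x
      _ = ‖x‖ := by rw [hφ1, one_mul]
  have hrey : RCLike.re (φ (lam • y)) ≤ ‖y‖ := by
    calc RCLike.re (φ (lam • y)) ≤ ‖φ (lam • y)‖ := RCLike.re_le_norm _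
      _ ≤ ‖φ‖ * ‖lam • y‖ := φ.le_opNorm _
      _ = ‖y‖ := by rw [hφ1, one_mul, norm_smul, hlam, one_mul]
  have hsum : RCLike.re (φ x) + RCLike.re (φ (lam • y)) = c := by
    have : φ x + φ (lam • y) = (c : 𝕜) := by rw [← map_add, ← hu0, hφu0]
    have := congrArg RCLike.re this
    simpa using this
  have hreqx : RCLike.re (φ x) = ‖x‖ := by linarith
  have hreqy : RCLike.re (φ (lam • y)) = ‖y‖ := by linarith
  have hφx : φ x = (‖x‖ : 𝕜) := by
    have h1 : ‖φ x‖ ≤ RCLike.re (φ x) := by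
      rw [hreqx]
      calc ‖φ x‖ ≤ ‖φ‖ * ‖x‖ := φ.le_opNorm x
        _ = ‖x‖ := by rw [hφ1, one_mul]
    rw [← RCLike.re_eq_self_of_le h1, hreqx]
  have hφly : φ (lam • y) = (‖y‖ : 𝕜) := by
    have h1 : ‖φ (lam • y)‖ ≤ RCLike.re (φ (lam • y)) := by
      rw [hreqy]
      calc ‖φ (lam • y)‖ ≤ ‖φ‖ * ‖lam • y‖ := φ.le_opNorm _
        _ = ‖y‖ := by rw [hφ1, one_mul, norm_smul, hlam, one_mul]
    rw [← RCLike.re_eq_self_of_le h1, hreqy]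
  -- smoothness : φ = f
  have hxcne : ((‖x‖ : 𝕜)) ≠ 0 := by exact_mod_cast hxn.ne'
  have hycne : ((‖y‖ : 𝕜)) ≠ 0 := by exact_mod_cast hyn.ne'
  set x1 : X := ((‖x‖ : 𝕜))⁻¹ • x with hx1
  have hx1norm : ‖x1‖ = 1 := by
    rw [hx1, norm_smul, norm_inv, RCLike.norm_ofReal, abs_of_pos hxn, inv_mul_cancel₀ hxn.ne']
  have hφf : φ = f := by
    obtain ⟨h0, -, huniq⟩ := hsmooth x1 hx1norm
    have e2 := huniq φ ⟨hφ1, by rw [hx1, map_smul, smul_eq_mul, hφx, inv_mul_cancel₀ hxcne]⟩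
    have e3 := huniq f ⟨hf1, by rw [hx1, map_smul, smul_eq_mul, hfx, inv_mul_cancel₀ hxcne]⟩
    rw [e2, e3]
  -- smoothness : lam • φ = g
  set y1 : X := ((‖y‖ : 𝕜))⁻¹ • y with hy1
  have hy1norm : ‖y1‖ = 1 := by
    rw [hy1, norm_smul, norm_inv, RCLike.norm_ofReal, abs_of_pos hyn, inv_mul_cancel₀ hyn.ne']
  have hφy : lam * φ y = (‖y‖ : 𝕜) := by rw [← hφly, map_smul, smul_eq_mul]
  have hψg : lam • φ = g := by
    obtain ⟨h0, -, huniq⟩ := hsmooth y1 hy1norm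
    have e2 := huniq (lam • φ) ⟨by rw [norm_smul lam φ, hlam, hφ1, one_mul],
      by simp only [ContinuousLinearMap.smul_apply, smul_eq_mul, hy1, map_smul]
         rw [hφy, inv_mul_cancel₀ hycne]⟩
    have e3 := huniq g ⟨hg1, by rw [hy1, map_smul, smul_eq_mul, hgy, inv_mul_cancel₀ hycne]⟩
    rw [e2, e3]
  -- the witness
  set u : X := ((c : 𝕜))⁻¹ • u0 with hu
  have hccne : ((c : 𝕜)) ≠ 0 := by exact_mod_cast hcpos.ne'
  have hunorm : ‖u‖ = 1 := by
    rw [hu, norm_smul, norm_inv, RCLike.norm_ofReal, abs_of_pos hcpos, hu0norm,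
      inv_mul_cancel₀ hcpos.ne']
  have hφu : φ u = 1 := by
    rw [hu, map_smul, smul_eq_mul, hφu0, inv_mul_cancel₀ hccne]
  have happ : (f.smulRight x + g.smulRight y) u = u0 := by
    have hfu : f u = 1 := by rw [← hφf]; exact hφu
    have hgu : g u = lam := by
      rw [← hψg]; simp only [ContinuousLinearMap.smul_apply, smul_eq_mul, hφu, mul_one]
    simp only [ContinuousLinearMap.add_apply, ContinuousLinearMap.smulRight_apply,
      hfu, hgu, one_smul, hu0]
  have hmem : c ≤ nrad (f.smulRight x + g.smulRight y) := by
    have := le_nrad (f.smulRight x + g.smulRight y) hunorm hφ1 hφu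
    rw [happ, hφu0] at this
    simpa [RCLike.norm_ofReal, abs_of_pos hcpos] using this
  have hle : nrad (f.smulRight x + g.smulRight y) ≤ c := by
    calc nrad (f.smulRight x + g.smulRight y) ≤ ‖f.smulRight x + g.smulRight y‖ :=
        nrad_le_norm _
      _ ≤ ‖f.smulRight x‖ + ‖g.smulRight y‖ := norm_add_le _ _
      _ = c := by
          rw [f.norm_smulRight_apply, g.norm_smulRight_apply, hf1, hg1, one_mul, one_mul]
  linarith
end
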